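/- Let K be a field, let m, n be positive integers, and let r be an integer with 0 ≤ r ≤ min(m, n). Set f = Σ_{i=0}^{r} x_i y_i in K[x_0, …, x_m, y_0, …, y_n]. There exist vectors x ∈ K^{m+1} and y ∈ K^{n+1} with x ≠ 0 and y ≠ 0 such that f vanishes at (x, y) and all of the partial derivatives ∂f/∂x_0, …, ∂f/∂x_m, ∂f/∂y_0, …, ∂f/∂y_n vanish at (x, y), if and only if r < min(m, n). -/
import Mathlib


open MvPolynomial

lemma stmt9_aux1 {σ : Type*} [DecidableEq σ] {K : Type*} [CommRing K]
    (s : σ → K) (a b v : σ) :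
    eval s (pderiv v (X a * X b : MvPolynomial σ K)) =
      (if a = v then s b else 0) + (if b = v then s a else 0) := by
  simp [pderiv_mul, pderiv_X, Pi.single_apply, apply_ite (eval s), add_comm]

lemma stmt9_aux2 (K : Type*) [Field K] (m n r : ℕ) (hrm : r ≤ m) (hrn : r ≤ n)
    (x : Fin (m+1) → K) (y : Fin (n+1) → K) (j : Fin (m+1)) (hj : j.val ≤ r) :
    eval (Sum.elim x y) (pderiv (Sum.inl j)
      (∑ i : Fin (r + 1),
        X (Sum.inl (Fin.castLE (by omega) i)) * X (Sum.inr (Fin.castLE (by omega) i)) :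
        MvPolynomial (Fin (m + 1) ⊕ Fin (n + 1)) K)) =
      y (Fin.castLE (by omega : r+1 ≤ n+1) ⟨j, by omega⟩) := by
  rw [map_sum, map_sum]
  rw [Finset.sum_congr rfl (fun i _ => stmt9_aux1 _ _ _ _)]
  simp only [Sum.elim_inr, Sum.elim_inl, Sum.inl.injEq, reduceCtorEq, if_false, add_zero]
  rw [Finset.sum_eq_single (⟨j, by omega⟩ : Fin (r+1))]
  · simp [Fin.ext_iff]
  · intro b _ hb
    rw [if_neg]
    intro h
    exact hb (by ext; simpa [Fin.ext_iff] using h)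
  · simp

lemma stmt9_aux3 (K : Type*) [Field K] (m n r : ℕ) (hrm : r ≤ m) (hrn : r ≤ n)
    (x : Fin (m+1) → K) (y : Fin (n+1) → K) (j : Fin (n+1)) (hj : j.val ≤ r) :
    eval (Sum.elim x y) (pderiv (Sum.inr j)
      (∑ i : Fin (r + 1),
        X (Sum.inl (Fin.castLE (by omega) i)) * X (Sum.inr (Fin.castLE (by omega) i)) :
        MvPolynomial (Fin (m + 1) ⊕ Fin (n + 1)) K)) =
      x (Fin.castLE (by omega : r+1 ≤ m+1) ⟨j, by omega⟩) := by
  rw [map_sum, map_sum]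
  rw [Finset.sum_congr rfl (fun i _ => stmt9_aux1 _ _ _ _)]
  simp only [Sum.elim_inr, Sum.elim_inl, Sum.inr.injEq, reduceCtorEq, if_false, zero_add]
  rw [Finset.sum_eq_single (⟨j, by omega⟩ : Fin (r+1))]
  · simp [Fin.ext_iff]
  · intro b _ hb
    rw [if_neg]
    intro h
    exact hb (by ext; simpa [Fin.ext_iff] using h)
  · simp

/-- For `f = ∑_{i=0}^{r} x_i y_i` with `0 ≤ r ≤ min m n`, there exists a point
`(x, y)` with `x ≠ 0`, `y ≠ 0` at which `f` and all its partial derivatives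
vanish, if and only if `r < min m n`. -/
theorem stmt9 (K : Type*) [Field K] (m n r : ℕ) (hm : 0 < m) (hn : 0 < n)
    (hr : r ≤ min m n)
    (f : MvPolynomial (Fin (m + 1) ⊕ Fin (n + 1)) K)
    (hf : f = ∑ i : Fin (r + 1),
      X (Sum.inl (Fin.castLE (by omega) i)) * X (Sum.inr (Fin.castLE (by omega) i))) :
    (∃ (x : Fin (m + 1) → K) (y : Fin (n + 1) → K), x ≠ 0 ∧ y ≠ 0 ∧
        eval (Sum.elim x y) f = 0 ∧
        ∀ v : Fin (m + 1) ⊕ Fin (n + 1), eval (Sum.elim x y) (pderiv v f) = 0) ↔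
      r < min m n := by
  have hrm : r ≤ m := le_trans hr (min_le_left _ _)
  have hrn : r ≤ n := le_trans hr (min_le_right _ _)
  subst hf
  constructor
  · rintro ⟨x, y, hx, hy, -, hder⟩
    by_contra h
    have hrmn : r = min m n := le_antisymm hr (not_lt.mp h)
    rcases le_total m n with hmn | hmn
    · have hrm' : r = m := by omega
      apply hx
      funext j
      have hj := hder (Sum.inr (Fin.castLE (by omega : r+1 ≤ n+1) ⟨j, by omega⟩))
      rw [stmt9_aux3 K m n r hrm hrn x y _ (by simp; omega)] at hj
      have heq : (Fin.castLE (by omega : r+1 ≤ m+1)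
          ⟨(Fin.castLE (by omega : r+1 ≤ n+1) (⟨j, by omega⟩ : Fin (r+1))).val, by
            simp; omega⟩ : Fin (m+1)) = j := by ext; simp
      rw [heq] at hj
      exact hj
    · have hrn' : r = n := by omega
      apply hy
      funext j
      have hj := hder (Sum.inl (Fin.castLE (by omega : r+1 ≤ m+1) ⟨j, by omega⟩))
      rw [stmt9_aux2 K m n r hrm hrn x y _ (by simp; omega)] at hj
      have heq : (Fin.castLE (by omega : r+1 ≤ n+1)
          ⟨(Fin.castLE (by omega : r+1 ≤ m+1) (⟨j, by omega⟩ : Fin (r+1))).val, by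
            simp; omega⟩ : Fin (n+1)) = j := by ext; simp
      rw [heq] at hj
      exact hj
  · intro hlt
    have hrm' : r < m := lt_of_lt_of_le hlt (min_le_left _ _)
    have hrn' : r < n := lt_of_lt_of_le hlt (min_le_right _ _)
    refine ⟨(Pi.single ⟨r+1, by omega⟩ 1 : Fin (m+1) → K), (Pi.single ⟨r+1, by omega⟩ 1 : Fin (n+1) → K), ?_, ?_, ?_, ?_⟩
    · intro h
      have := congrFun h ⟨r+1, by omega⟩
      simp at this
    · intro h
      have := congrFun h ⟨r+1, by omega⟩
      simp at this
    · rw [map_sum]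
      apply Finset.sum_eq_zero
      intro i _
      have : (Pi.single (⟨r+1, by omega⟩ : Fin (m+1)) 1 : Fin (m+1) → K)
          (Fin.castLE (by omega : r+1 ≤ m+1) i) = 0 := by
        rw [Pi.single_apply, if_neg]
        simp [Fin.ext_iff]; omega
      simp [this]
    · rintro (j | j) <;>
      · rw [map_sum, map_sum, Finset.sum_congr rfl (fun i _ => stmt9_aux1 _ _ _ _)]
        apply Finset.sum_eq_zero
        intro i _
        have h1 : (Pi.single (⟨r+1, by omega⟩ : Fin (m+1)) 1 : Fin (m+1) → K)
            (Fin.castLE (by omega : r+1 ≤ m+1) i) = 0 := by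
          rw [Pi.single_apply, if_neg]; simp [Fin.ext_iff]; omega
        have h2 : (Pi.single (⟨r+1, by omega⟩ : Fin (n+1)) 1 : Fin (n+1) → K)
            (Fin.castLE (by omega : r+1 ≤ n+1) i) = 0 := by
          rw [Pi.single_apply, if_neg]; simp [Fin.ext_iff]; omega
        simp [h1, h2]
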